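/- Let S be a nonempty finite set and let P(S) ⊂ ℝ^S denote the simplex of probability mass functions on S, with its Borel σ-algebra. Let Π be a Borel probability measure on P(S), and let p^0 ∈ P(S) satisfy Π{p ∈ P(S) : Σ_{s∈S} |p(s) − p^0(s)| < ε} > 0 for every ε > 0. Let X_1, X_2, … be i.i.d. S-valued random variables with law p^0, and for n ≥ 1 define the posterior Π_n(A) = (∫_A ∏_{i=1}^n p(X_i) Π(dp)) / (∫_{P(S)} ∏_{i=1}^n p(X_i) Π(dp)) for Borel A ⊆ P(S). Then for every ε > 0, with probability one, Π_n{p : Σ_{s∈S} |p(s) − p^0(s)| < ε} → 1 as n → ∞. -/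

import Mathlib

open MeasureTheory ProbabilityTheory Filter Finset
open scoped Classical Topology

/-- Gibbs-type inequality. -/
lemma gibbs_aux {S : Type*} [Fintype S] (p0 p : S → ℝ)
    (h00 : ∀ s, 0 ≤ p0 s) (hsum0 : ∑ s, p0 s = 1)
    (hp0 : ∀ s, 0 ≤ p s) (hpsum : ∑ s, p s = 1) (hne : p ≠ p0) :
    ∏ s ∈ Finset.univ.filter (fun s => 0 < p0 s), (p s) ^ (p0 s)
      < ∏ s ∈ Finset.univ.filter (fun s => 0 < p0 s), (p0 s) ^ (p0 s) := by
  set T := Finset.univ.filter (fun s => 0 < p0 s) with hT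
  have hTpos : ∀ s ∈ T, 0 < p0 s := fun s hs => (Finset.mem_filter.1 hs).2
  have hRHSpos : 0 < ∏ s ∈ T, (p0 s) ^ (p0 s) :=
    Finset.prod_pos fun s hs => Real.rpow_pos_of_pos (hTpos s hs) _
  have hTsum : ∑ s ∈ T, p0 s = 1 := by
    rw [← hsum0]
    apply Finset.sum_filter_of_ne
    intro s _ h
    exact lt_of_le_of_ne (h00 s) (Ne.symm h)
  have hsumTp : ∑ s ∈ T, p s ≤ 1 := by
    rw [← hpsum]
    exact Finset.sum_le_sum_of_subset_of_nonneg (Finset.subset_univ T)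
      (fun s _ _ => hp0 s)
  by_cases hz : ∃ s ∈ T, p s = 0
  · obtain ⟨s, hs, hps⟩ := hz
    calc ∏ s ∈ T, (p s) ^ (p0 s) = 0 := by
          apply Finset.prod_eq_zero hs
          rw [hps, Real.zero_rpow (ne_of_gt (hTpos s hs))]
      _ < _ := hRHSpos
  · push_neg at hz
    have hppos : ∀ s ∈ T, 0 < p s := fun s hs => lt_of_le_of_ne (hp0 s) (Ne.symm (hz s hs))
    have hdiff : ∃ s ∈ T, p s ≠ p0 s := by
      by_contra h
      push_neg at h
      have hsumT : ∑ s ∈ T, p s = 1 := by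
        rw [Finset.sum_congr rfl h]; exact hTsum
      have hoff : ∀ s, s ∉ T → p s = 0 := by
        intro s hs
        have h0 : ∑ s ∈ Tᶜ, p s = 0 := by
          have := Finset.sum_add_sum_compl T p
          rw [hsumT, hpsum] at this; linarith
        exact Finset.sum_eq_zero_iff_of_nonneg (fun t _ => hp0 t) |>.1 h0 s (Finset.mem_compl.2 hs)
      apply hne
      funext s
      by_cases hsT : s ∈ T
      · exact h s hsT
      · rw [hoff s hsT]
        have : ¬ (0 < p0 s) := fun hc => hsT (Finset.mem_filter.2 ⟨Finset.mem_univ s, hc⟩)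
        linarith [h00 s]
    -- log-level strict inequality
    have key : ∑ s ∈ T, p0 s * Real.log (p s / p0 s) < 0 := by
      obtain ⟨s0, hs0T, hs0⟩ := hdiff
      have hlt : ∑ s ∈ T, p0 s * Real.log (p s / p0 s)
          < ∑ s ∈ T, p0 s * (p s / p0 s - 1) := by
        apply Finset.sum_lt_sum
        · intro s hs
          have hpos : 0 < p s / p0 s := div_pos (hppos s hs) (hTpos s hs)
          exact mul_le_mul_of_nonneg_left (Real.log_le_sub_one_of_pos hpos)
            (le_of_lt (hTpos s hs))
        · refine ⟨s0, hs0T, ?_⟩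
          have hpos : 0 < p s0 / p0 s0 := div_pos (hppos s0 hs0T) (hTpos s0 hs0T)
          have hne1 : p s0 / p0 s0 ≠ 1 := by
            rw [ne_eq, div_eq_one_iff_eq (ne_of_gt (hTpos s0 hs0T))]; exact hs0
          exact mul_lt_mul_of_pos_left (Real.log_lt_sub_one_of_pos hpos hne1) (hTpos s0 hs0T)
      have heq : ∑ s ∈ T, p0 s * (p s / p0 s - 1) = (∑ s ∈ T, p s) - 1 := by
        have hterm : ∀ s ∈ T, p0 s * (p s / p0 s - 1) = p s - p0 s := by
          intro s hs
          have h0 : p0 s ≠ 0 := ne_of_gt (hTpos s hs)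
          rw [mul_comm, sub_mul, one_mul, div_mul_cancel₀ _ h0]
        rw [Finset.sum_congr rfl hterm, Finset.sum_sub_distrib, hTsum]
      rw [heq] at hlt
      linarith
    -- convert products to exp of sums
    have hL : ∏ s ∈ T, (p s) ^ (p0 s) = Real.exp (∑ s ∈ T, Real.log (p s) * p0 s) := by
      rw [Real.exp_sum]
      exact Finset.prod_congr rfl fun s hs => Real.rpow_def_of_pos (hppos s hs) _
    have hR : ∏ s ∈ T, (p0 s) ^ (p0 s) = Real.exp (∑ s ∈ T, Real.log (p0 s) * p0 s) := by
      rw [Real.exp_sum]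
      exact Finset.prod_congr rfl fun s hs => Real.rpow_def_of_pos (hTpos s hs) _
    rw [hL, hR]
    apply Real.exp_lt_exp.2
    have : ∑ s ∈ T, p0 s * Real.log (p s / p0 s)
        = (∑ s ∈ T, Real.log (p s) * p0 s) - ∑ s ∈ T, Real.log (p0 s) * p0 s := by
      rw [← Finset.sum_sub_distrib]
      apply Finset.sum_congr rfl
      intro s hs
      rw [Real.log_div (ne_of_gt (hppos s hs)) (ne_of_gt (hTpos s hs))]
      ring
    linarith [this ▸ key]

set_option maxHeartbeats 1000000 in
lemma key_bound {S : Type*} [Fintype S] (p0 : S → ℝ)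
    (h00 : ∀ s, 0 ≤ p0 s) (hsum0 : ∑ s, p0 s = 1) (ε : ℝ) (hε : 0 < ε) :
    ∃ δ : ℝ, 0 < δ ∧ ∃ c : ℝ, 0 < c ∧ c < 1 ∧
      ∀ q : S → ℝ, (∀ s, 0 ≤ q s) → (∀ s ∈ Finset.univ.filter (fun s => 0 < p0 s), |q s - p0 s| ≤ δ) →
      ∀ p : S → ℝ, (∀ s, 0 ≤ p s) → (∑ s, p s = 1) → ε ≤ ∑ s, |p s - p0 s| →
        ∏ s ∈ Finset.univ.filter (fun s => 0 < p0 s), (p s) ^ (q s)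
          ≤ c * ∏ s ∈ Finset.univ.filter (fun s => 0 < p0 s), (p0 s) ^ (q s) := by
  set T := Finset.univ.filter (fun s => 0 < p0 s) with hT
  have hTpos : ∀ s ∈ T, 0 < p0 s := fun s hs => (Finset.mem_filter.1 hs).2
  by_contra hcon
  push_neg at hcon
  -- extract bad sequences
  have hbad : ∀ n : ℕ, ∃ q : S → ℝ, (∀ s, 0 ≤ q s) ∧ (∀ s ∈ T, |q s - p0 s| ≤ 1/(n+1)) ∧
      ∃ p : S → ℝ, (∀ s, 0 ≤ p s) ∧ (∑ s, p s = 1) ∧ ε ≤ ∑ s, |p s - p0 s| ∧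
        (1 - 1/(n+2)) * ∏ s ∈ T, (p0 s) ^ (q s) < ∏ s ∈ T, (p s) ^ (q s) := by
    intro n
    have hδ : (0:ℝ) < 1/(n+1) := by positivity
    have hc1 : (0:ℝ) < 1 - 1/(n+2) := by
      have h1 : (1:ℝ)/(n+2) < 1 := by
        rw [div_lt_one (by positivity)]
        linarith [Nat.cast_nonneg (α := ℝ) n]
      linarith
    have hc2 : (1:ℝ) - 1/(n+2) < 1 := by
      have : (0:ℝ) < 1/(n+2) := by positivity
      linarith
    obtain ⟨q, hq0, hqδ, p, h1, h2, h3, h4⟩ := hcon (1/(n+1)) hδ (1 - 1/(n+2)) hc1 hc2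
    exact ⟨q, hq0, hqδ, p, h1, h2, h3, h4⟩
  choose q hq0 hqδ p hp0' hpsum hpfar hprod using hbad
  -- compactness
  set C : Set (S → ℝ) := {f | (∀ s, 0 ≤ f s) ∧ (∑ s, f s = 1) ∧ ε ≤ ∑ s, |f s - p0 s|} with hC
  have hCclosed : IsClosed C := by
    have h1 : IsClosed {f : S → ℝ | ∀ s, 0 ≤ f s} := by
      have : {f : S → ℝ | ∀ s, 0 ≤ f s} = ⋂ s, {f | 0 ≤ f s} := by
        ext f; simp [Set.mem_iInter]
      rw [this]
      exact isClosed_iInter fun s => isClosed_le continuous_const (continuous_apply s)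
    have h2 : IsClosed {f : S → ℝ | ∑ s, f s = 1} :=
      isClosed_eq (by continuity) continuous_const
    have h3 : IsClosed {f : S → ℝ | ε ≤ ∑ s, |f s - p0 s|} :=
      isClosed_le continuous_const (by continuity)
    have : C = {f : S → ℝ | ∀ s, 0 ≤ f s} ∩ ({f : S → ℝ | ∑ s, f s = 1} ∩ {f : S → ℝ | ε ≤ ∑ s, |f s - p0 s|}) := by
      ext f; simp [hC, Set.mem_inter_iff, and_assoc]
    rw [this]
    exact h1.inter (h2.inter h3)
  have hCbdd : Bornology.IsBounded C := by
    apply (Metric.isBounded_closedBall (x := (0 : S → ℝ)) (r := 1)).subset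
    intro f hf
    obtain ⟨hf0, hfs, -⟩ := hf
    have hf1 : ∀ s, f s ≤ 1 := by
      intro s
      rw [← hfs]
      exact Finset.single_le_sum (fun t _ => hf0 t) (Finset.mem_univ s)
    rw [Metric.mem_closedBall, dist_zero_right, pi_norm_le_iff_of_nonneg zero_le_one]
    intro s
    rw [Real.norm_eq_abs, abs_le]
    exact ⟨by linarith [hf0 s], hf1 s⟩
  have hCcomp : IsCompact C := Metric.isCompact_of_isClosed_isBounded hCclosed hCbdd
  have hpC : ∀ n, p n ∈ C := fun n => ⟨hp0' n, hpsum n, hpfar n⟩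
  obtain ⟨x, hxC, φ, hφ, hconv⟩ := hCcomp.tendsto_subseq hpC
  -- coordinatewise convergence
  have hxcoord : ∀ s, Tendsto (fun n => p (φ n) s) atTop (𝓝 (x s)) := by
    intro s
    exact ((continuous_apply s).continuousAt.tendsto).comp hconv
  have hφat : Tendsto φ atTop atTop := hφ.tendsto_atTop
  have hqcoord : ∀ s ∈ T, Tendsto (fun n => q (φ n) s) atTop (𝓝 (p0 s)) := by
    intro s hs
    have h1 : Tendsto (fun n => q n s - p0 s) atTop (𝓝 (0:ℝ)) := by
      refine squeeze_zero_norm (fun n => ?_) tendsto_one_div_add_atTop_nhds_zero_nat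
      rw [Real.norm_eq_abs]
      exact hqδ n s hs
    have h2 : Tendsto (fun n => (q n s - p0 s) + p0 s) atTop (𝓝 (0 + p0 s)) :=
      h1.add tendsto_const_nhds
    simp only [zero_add, sub_add_cancel] at h2
    exact h2.comp hφat
  -- limits of products
  have hA : Tendsto (fun n => ∏ s ∈ T, (p (φ n) s) ^ (q (φ n) s)) atTop
      (𝓝 (∏ s ∈ T, (x s) ^ (p0 s))) := by
    apply tendsto_finset_prod
    intro s hs
    exact (hxcoord s).rpow (hqcoord s hs) (Or.inr (hTpos s hs))
  have hB : Tendsto (fun n => ∏ s ∈ T, (p0 s) ^ (q (φ n) s)) atTop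
      (𝓝 (∏ s ∈ T, (p0 s) ^ (p0 s))) := by
    apply tendsto_finset_prod
    intro s hs
    exact tendsto_const_nhds.rpow (hqcoord s hs) (Or.inl (ne_of_gt (hTpos s hs)))
  have hc : Tendsto (fun n : ℕ => (1:ℝ) - 1/(φ n + 2)) atTop (𝓝 1) := by
    have h0 : Tendsto (fun n : ℕ => (1:ℝ)/((n:ℝ) + 2)) atTop (𝓝 (0:ℝ)) := by
      apply squeeze_zero (fun n => by positivity) (fun n => ?_) tendsto_one_div_add_atTop_nhds_zero_nat
      apply div_le_div_of_nonneg_left zero_le_one (by positivity)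
      linarith [Nat.cast_nonneg (α := ℝ) n]
    have h2 : Tendsto (fun n : ℕ => (1:ℝ) - 1/((n:ℝ)+2)) atTop (𝓝 (1 - 0 : ℝ)) :=
      tendsto_const_nhds.sub h0
    simp only [sub_zero] at h2
    exact h2.comp hφat
  -- pass inequality to the limit
  have hle : ∏ s ∈ T, (p0 s) ^ (p0 s) ≤ ∏ s ∈ T, (x s) ^ (p0 s) := by
    have := le_of_tendsto_of_tendsto' ((hc.mul hB)) hA
      (fun n => le_of_lt (hprod (φ n)))
    simpa using this
  -- contradiction with Gibbs
  have hxne : x ≠ p0 := by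
    intro h
    obtain ⟨-, -, hfar⟩ := hxC
    rw [h] at hfar
    simp at hfar
    linarith
  obtain ⟨hx0, hxsum, -⟩ := hxC
  have := gibbs_aux p0 x h00 hsum0 hx0 hxsum hxne
  rw [← hT] at this
  linarith

lemma law_eq {S : Type*} [Fintype S] [MeasurableSpace S] [MeasurableSingletonClass S]
    {Ω : Type*} [MeasurableSpace Ω] (P : Measure Ω) (X : Ω → S) (hX : Measurable X)
    (p0 : S → ℝ) (h : ∀ s, P (X ⁻¹' {s}) = ENNReal.ofReal (p0 s)) (u : Set S) :
    P (X ⁻¹' u) = ∑ s ∈ (Set.toFinite u).toFinset, ENNReal.ofReal (p0 s) := by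
  have hu : X ⁻¹' u = ⋃ s ∈ (Set.toFinite u).toFinset, X ⁻¹' {s} := by
    ext ω; simp [Set.Finite.mem_toFinset]
  rw [hu, measure_biUnion_finset]
  · exact Finset.sum_congr rfl fun s _ => h s
  · intro s _ t _ hst
    exact Disjoint.preimage _ (Set.disjoint_singleton.2 hst)
  · exact fun s _ => hX (measurableSet_singleton s)

set_option maxHeartbeats 2000000 in
/-- **Posterior consistency (Section 3)**: on a nonempty finite set `S`, if a prior `Π` on the
simplex of pmfs gives positive mass to every `L1` neighborhood of the true pmf `p⁰`, and
`X₁, X₂, …` are i.i.d. with law `p⁰`, then for every `ε > 0`, almost surely the posterior mass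
of the `L1` ball of radius `ε` around `p⁰` converges to `1`. -/
theorem posterior_consistency {S : Type*} [Fintype S] [Nonempty S]
    [MeasurableSpace S] [MeasurableSingletonClass S]
    (Pri : Measure {p : S → ℝ // (∀ s, 0 ≤ p s) ∧ (∀ s, p s ≤ 1) ∧ ∑ s, p s = 1})
    [IsProbabilityMeasure Pri]
    (p0 : S → ℝ) (hp00 : ∀ s, 0 ≤ p0 s) (hp01 : ∀ s, p0 s ≤ 1)
    (hp0sum : ∑ s, p0 s = 1)
    -- full `L1` prior support at `p⁰`
    (hsupp : ∀ ε : ℝ, 0 < ε → 0 < Pri {p | ∑ s, |p.1 s - p0 s| < ε})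
    {Ω : Type*} [MeasurableSpace Ω] (P : Measure Ω) [IsProbabilityMeasure P]
    (X : ℕ → Ω → S) (hXmeas : ∀ i, Measurable (X i))
    (hindep : iIndepFun X P)
    (hlaw : ∀ (i : ℕ) (s : S), P (X i ⁻¹' {s}) = ENNReal.ofReal (p0 s))
    (ε : ℝ) (hε : 0 < ε) :
    ∀ᵐ ω ∂P, Tendsto (fun n : ℕ =>
        (∫ p in {p | ∑ s, |p.1 s - p0 s| < ε},
            (∏ i ∈ Finset.range n, p.1 (X i ω)) ∂Pri) /
        (∫ p, (∏ i ∈ Finset.range n, p.1 (X i ω)) ∂Pri))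
      atTop (nhds 1) := by
  set T := Finset.univ.filter (fun s => 0 < p0 s) with hT
  have hTpos : ∀ s ∈ T, 0 < p0 s := fun s hs => (Finset.mem_filter.1 hs).2
  have hTmemiff : ∀ s, s ∈ T ↔ 0 < p0 s := fun s => by
    simp [hT]
  -- minimum of p0 on T
  have hTne : T.Nonempty := by
    by_contra h
    rw [Finset.not_nonempty_iff_eq_empty] at h
    have : ∑ s, p0 s ≤ 0 := by
      apply Finset.sum_nonpos
      intro s _
      by_contra hs
      push_neg at hs
      have : s ∈ T := (hTmemiff s).2 hs
      simp [h] at this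
    linarith
  set m := T.inf' hTne p0 with hm
  have hmpos : 0 < m := (Finset.lt_inf'_iff hTne).2 hTpos
  have hmle : ∀ s ∈ T, m ≤ p0 s := fun s hs => Finset.inf'_le _ hs
  -- constants
  obtain ⟨δ, hδ, c, hc0, hc1, hkey⟩ := key_bound p0 hp00 hp0sum ε hε
  set r : ℝ := (1 + c)/2 with hr
  have hr0 : 0 < r := by rw [hr]; linarith
  have hr1 : r < 1 := by rw [hr]; linarith
  have hcr : c < r := by rw [hr]; linarith
  set δ' : ℝ := (1 - c) * m / 2 with hδ'
  have hδ'0 : 0 < δ' := by rw [hδ']; nlinarith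
  -- type of pmfs
  set Δt := {p : S → ℝ // (∀ s, 0 ≤ p s) ∧ (∀ s, p s ≤ 1) ∧ ∑ s, p s = 1} with hΔt
  -- measurability
  have hmeas_eval : ∀ s, Measurable (fun p : Δt => p.1 s) :=
    fun s => (measurable_pi_apply s).comp measurable_subtype_coe
  have hmeas_prod : ∀ (g : ℕ → S) (n : ℕ),
      Measurable (fun p : Δt => ∏ i ∈ Finset.range n, p.1 (g i)) :=
    fun g n => Finset.measurable_prod _ (fun i _ => hmeas_eval (g i))
  have hball_meas : MeasurableSet {p : Δt | ∑ s, |p.1 s - p0 s| < ε} := by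
    apply measurableSet_lt
    · exact Finset.measurable_sum _ (fun s _ => ((hmeas_eval s).sub measurable_const).abs)
    · exact measurable_const
  have hB_meas : MeasurableSet {p : Δt | ∑ s, |p.1 s - p0 s| < δ'} := by
    apply measurableSet_lt
    · exact Finset.measurable_sum _ (fun s _ => ((hmeas_eval s).sub measurable_const).abs)
    · exact measurable_const
  have hint : ∀ (g : ℕ → S) (n : ℕ),
      Integrable (fun p : Δt => ∏ i ∈ Finset.range n, p.1 (g i)) Pri := by
    intro g n
    apply (integrable_const (1:ℝ)).mono' (hmeas_prod g n).aestronglyMeasurable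
    apply ae_of_all
    intro p
    rw [Real.norm_eq_abs, abs_of_nonneg (Finset.prod_nonneg fun i _ => p.2.1 _)]
    exact Finset.prod_le_one (fun i _ => p.2.1 _) (fun i _ => p.2.2.1 _)
  -- prior mass of small ball
  have hPriB : 0 < (Pri {p : Δt | ∑ s, |p.1 s - p0 s| < δ'}).toReal := by
    apply ENNReal.toReal_pos (ne_of_gt (hsupp δ' hδ'0)) (measure_ne_top _ _)
  -- identically distributed
  have hlawset : ∀ i (u : Set S),
      P (X i ⁻¹' u) = ∑ s ∈ (Set.toFinite u).toFinset, ENNReal.ofReal (p0 s) :=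
    fun i => law_eq P (X i) (hXmeas i) p0 (hlaw i)
  have identX : ∀ i, IdentDistrib (X i) (X 0) P P := by
    intro i
    refine ⟨(hXmeas i).aemeasurable, (hXmeas 0).aemeasurable, ?_⟩
    apply Measure.ext
    intro u hu
    rw [Measure.map_apply (hXmeas i) hu, Measure.map_apply (hXmeas 0) hu,
      hlawset i u, hlawset 0 u]
  -- strong law for indicators
  have hslln : ∀ᵐ ω ∂P, ∀ s : S, Tendsto
      (fun n : ℕ => (∑ i ∈ Finset.range n, (if X i ω = s then (1:ℝ) else 0)) / n)
      atTop (𝓝 (p0 s)) := by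
    rw [ae_all_iff]
    intro s
    set fs : S → ℝ := fun t => if t = s then 1 else 0 with hfs
    have hfsmeas : Measurable fs := measurable_of_countable fs
    have hYmeas : ∀ i, Measurable (fun ω => fs (X i ω)) := fun i => hfsmeas.comp (hXmeas i)
    have hYint : Integrable (fun ω => fs (X 0 ω)) P := by
      apply (integrable_const (1:ℝ)).mono' (hYmeas 0).aestronglyMeasurable
      apply ae_of_all
      intro ωx
      rw [Real.norm_eq_abs]
      simp only [hfs]
      by_cases h : X 0 ωx = s <;> simp [h]
    have hYindep : Pairwise (Function.onFun (IndepFun · · P) (fun i ω => fs (X i ω))) := by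
      intro i j hij
      exact (hindep.indepFun hij).comp hfsmeas hfsmeas
    have hYident : ∀ i, IdentDistrib (fun ω => fs (X i ω)) (fun ω => fs (X 0 ω)) P P :=
      fun i => (identX i).comp hfsmeas
    have hSL := strong_law_ae_real (fun i ω => fs (X i ω)) hYint hYindep hYident
    have hEY : P[fun ω => fs (X 0 ω)] = p0 s := by
      have heq : (fun ω => fs (X 0 ω))
          = Set.indicator (X 0 ⁻¹' {s}) (fun _ => (1:ℝ)) := by
        funext ωx
        rw [Set.indicator_apply, hfs]
        by_cases h : X 0 ωx = s <;> simp [h]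
      rw [heq, integral_indicator_const (1:ℝ) (hXmeas 0 (measurableSet_singleton s)),
        Measure.real, hlaw 0 s, smul_eq_mul, mul_one, ENNReal.toReal_ofReal (hp00 s)]
    rw [hEY] at hSL
    exact hSL
  -- all observations land in the support of p0
  have hTmem : ∀ᵐ ω ∂P, ∀ i, X i ω ∈ T := by
    rw [ae_all_iff]
    intro i
    rw [ae_iff]
    have hset : {ω | ¬ X i ω ∈ T} = X i ⁻¹' {s | s ∉ T} := rfl
    rw [hset, hlawset i]
    apply Finset.sum_eq_zero
    intro s hs
    rw [Set.Finite.mem_toFinset] at hs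
    have : ¬ 0 < p0 s := fun h => hs ((hTmemiff s).2 h)
    rw [ENNReal.ofReal_eq_zero]
    linarith
  rw [← hT] at hkey
  filter_upwards [hslln, hTmem] with ω hω1 hω2
  -- counts and empirical frequencies
  set Nc : ℕ → S → ℕ := fun n s => ((Finset.range n).filter (fun i => X i ω = s)).card with hNc
  set L : ℕ → ℝ := fun n => ∏ i ∈ Finset.range n, p0 (X i ω) with hL
  have hLpos : ∀ n, 0 < L n := fun n => Finset.prod_pos fun i _ => hTpos _ (hω2 i)
  set qe : ℕ → S → ℝ := fun n s => (Nc n s : ℝ) / n with hqe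
  have hq0 : ∀ (n : ℕ) (s : S), 0 ≤ qe n s := fun n s => by positivity
  have hqtend : ∀ s, Tendsto (fun n => qe n s) atTop (𝓝 (p0 s)) := by
    intro s
    apply (hω1 s).congr
    intro n
    rw [Finset.sum_boole]
  have hev1 : ∀ᶠ n : ℕ in atTop, ∀ s ∈ T, |qe n s - p0 s| ≤ δ := by
    rw [eventually_all_finset]
    intro s _
    obtain ⟨N, hN⟩ := Metric.tendsto_atTop.1 (hqtend s) δ hδ
    rw [eventually_atTop]
    exact ⟨N, fun n hn => by rw [← Real.dist_eq]; exact le_of_lt (hN n hn)⟩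
  have hev : ∀ᶠ n : ℕ in atTop, (1 ≤ n ∧ ∀ s ∈ T, |qe n s - p0 s| ≤ δ) :=
    (eventually_ge_atTop 1).and hev1
  -- fiberwise product decomposition
  have prodfib : ∀ (f : S → ℝ) (n : ℕ),
      ∏ i ∈ Finset.range n, f (X i ω) = ∏ s ∈ T, f s ^ (Nc n s) := by
    intro f n
    rw [← Finset.prod_fiberwise_of_maps_to' (fun i _ => hω2 i) f]
    apply Finset.prod_congr rfl
    intro s _
    rw [Finset.prod_const]
  -- pointwise numerator bound
  have hnum_pt : ∀ n : ℕ, 1 ≤ n → (∀ s ∈ T, |qe n s - p0 s| ≤ δ) → ∀ p : Δt,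
      ε ≤ ∑ s, |p.1 s - p0 s| →
      ∏ i ∈ Finset.range n, p.1 (X i ω) ≤ c^n * L n := by
    intro n hn hδn p hp
    have hn0 : (n:ℝ) ≠ 0 := Nat.cast_ne_zero.2 (by omega)
    have hkey' := hkey (qe n) (hq0 n) hδn p.1 p.2.1 p.2.2.2 hp
    calc ∏ i ∈ Finset.range n, p.1 (X i ω) = ∏ s ∈ T, (p.1 s) ^ (Nc n s) := prodfib _ n
    _ = (∏ s ∈ T, (p.1 s) ^ (qe n s)) ^ n := by
        rw [← Finset.prod_pow]
        apply Finset.prod_congr rfl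
        intro s _
        rw [← Real.rpow_natCast ((p.1 s) ^ (qe n s)) n, ← Real.rpow_mul (p.2.1 s),
          hqe, div_mul_cancel₀ _ hn0, Real.rpow_natCast]
    _ ≤ (c * ∏ s ∈ T, (p0 s) ^ (qe n s)) ^ n :=
        pow_le_pow_left₀ (Finset.prod_nonneg fun s _ => Real.rpow_nonneg (p.2.1 s) _) hkey' n
    _ = c^n * (∏ s ∈ T, (p0 s) ^ (qe n s)) ^ n := mul_pow _ _ _
    _ = c^n * ∏ s ∈ T, (p0 s) ^ (Nc n s) := by
        congr 1
        rw [← Finset.prod_pow]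
        apply Finset.prod_congr rfl
        intro s _
        rw [← Real.rpow_natCast ((p0 s) ^ (qe n s)) n, ← Real.rpow_mul (hp00 s),
          hqe, div_mul_cancel₀ _ hn0, Real.rpow_natCast]
    _ = c^n * L n := by
        have := prodfib p0 n
        congr 1
        exact this.symm
  -- pointwise denominator bound
  have hden_pt : ∀ (n : ℕ) (p : Δt), (∑ s, |p.1 s - p0 s| < δ') →
      r^n * L n ≤ ∏ i ∈ Finset.range n, p.1 (X i ω) := by
    intro n p hp
    have h1 : ∀ i ∈ Finset.range n, r * p0 (X i ω) ≤ p.1 (X i ω) := by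
      intro i _
      have hsT : X i ω ∈ T := hω2 i
      set s := X i ω with hs
      have h2 : |p.1 s - p0 s| ≤ ∑ t, |p.1 t - p0 t| :=
        Finset.single_le_sum (f := fun t => |p.1 t - p0 t|) (fun t _ => abs_nonneg _)
          (Finset.mem_univ s)
      have h3 : |p.1 s - p0 s| < δ' := lt_of_le_of_lt h2 hp
      have h4 : m ≤ p0 s := hmle s hsT
      have habs := abs_lt.1 h3
      have h5 : p0 s - δ' < p.1 s := by linarith [habs.1]
      rw [hδ'] at h5
      rw [hr]
      nlinarith [hc0, hc1]
    calc r^n * L n = ∏ i ∈ Finset.range n, (r * p0 (X i ω)) := by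
          rw [Finset.prod_mul_distrib, Finset.prod_const, Finset.card_range]
    _ ≤ _ := Finset.prod_le_prod (fun i _ => mul_nonneg (le_of_lt hr0) (hp00 _)) h1
  -- integral bounds
  set Bset := {p : Δt | ∑ s, |p.1 s - p0 s| < δ'} with hBset
  set ball := {p : Δt | ∑ s, |p.1 s - p0 s| < ε} with hball
  set D : ℕ → ℝ := fun n => ∫ p, (∏ i ∈ Finset.range n, p.1 (X i ω)) ∂Pri with hD
  set A : ℕ → ℝ := fun n => ∫ p in ballᶜ, (∏ i ∈ Finset.range n, p.1 (X i ω)) ∂Pri with hA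
  have hDnonneg : ∀ n, 0 ≤ D n := fun n =>
    integral_nonneg fun p => Finset.prod_nonneg fun i _ => p.2.1 _
  have hAnonneg : ∀ n, 0 ≤ A n := fun n =>
    setIntegral_nonneg hball_meas.compl fun p _ => Finset.prod_nonneg fun i _ => p.2.1 _
  have hDlow : ∀ n : ℕ, (Pri Bset).toReal * (r^n * L n) ≤ D n := by
    intro n
    have h1 : ∫ _ in Bset, (r^n * L n) ∂Pri
        ≤ ∫ p in Bset, (∏ i ∈ Finset.range n, p.1 (X i ω)) ∂Pri :=
      setIntegral_mono_on ((integrable_const _).integrableOn) ((hint _ n).integrableOn)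
        hB_meas (fun p hp => hden_pt n p hp)
    rw [setIntegral_const, smul_eq_mul] at h1
    exact h1.trans (setIntegral_le_integral (hint _ n)
      (ae_of_all _ fun p => Finset.prod_nonneg fun i _ => p.2.1 _))
  have hDpos : ∀ n, 0 < (Pri Bset).toReal * (r^n * L n) := fun n =>
    mul_pos hPriB (mul_pos (pow_pos hr0 n) (hLpos n))
  have hAup : ∀ n : ℕ, 1 ≤ n → (∀ s ∈ T, |qe n s - p0 s| ≤ δ) → A n ≤ c^n * L n := by
    intro n hn hδn
    have h1 : ∫ p in ballᶜ, (∏ i ∈ Finset.range n, p.1 (X i ω)) ∂Pri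
        ≤ ∫ _ in ballᶜ, (c^n * L n) ∂Pri := by
      apply setIntegral_mono_on ((hint _ n).integrableOn) ((integrable_const _).integrableOn)
        hball_meas.compl
      intro p hp
      apply hnum_pt n hn hδn p
      simpa [hball, not_lt] using hp
    rw [setIntegral_const, smul_eq_mul] at h1
    have h2 : (Pri ballᶜ).toReal ≤ 1 := by
      have := ENNReal.toReal_mono (by simp) (prob_le_one (μ := Pri) (s := ballᶜ))
      simpa using this
    calc A n ≤ (Pri ballᶜ).toReal * (c^n * L n) := h1
    _ ≤ 1 * (c^n * L n) :=
        mul_le_mul_of_nonneg_right h2 (le_of_lt (mul_pos (pow_pos hc0 n) (hLpos n)))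
    _ = c^n * L n := one_mul _
  -- ratio tends to zero
  have hg : Tendsto (fun n => A n / D n) atTop (𝓝 0) := by
    apply squeeze_zero' (g := fun n : ℕ => (c/r)^n / (Pri Bset).toReal)
    · exact Eventually.of_forall fun n => div_nonneg (hAnonneg n) (hDnonneg n)
    · filter_upwards [hev] with n hn
      obtain ⟨hn1, hn2⟩ := hn
      have h1 : A n / D n ≤ (c^n * L n) / ((Pri Bset).toReal * (r^n * L n)) :=
        div_le_div₀ (le_of_lt (mul_pos (pow_pos hc0 n) (hLpos n))) (hAup n hn1 hn2)
          (hDpos n) (hDlow n)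
      have halg : ∀ (a b LL PB : ℝ), LL ≠ 0 → PB ≠ 0 → b ≠ 0 →
          a ^ n * LL / (PB * (b ^ n * LL)) = (a/b)^n / PB := by
        intro a b LL PB ha hb hc
        rw [div_pow]
        field_simp
      exact h1.trans_eq (halg c r (L n) _ (ne_of_gt (hLpos n)) (ne_of_gt hPriB) (ne_of_gt hr0))
    · have h3 := (tendsto_pow_atTop_nhds_zero_of_lt_one
        (div_nonneg (le_of_lt hc0) (le_of_lt hr0)) ((div_lt_one hr0).2 hcr)).div_const
        ((Pri Bset).toReal)
      simpa using h3
  have hfinal : Tendsto (fun n => 1 - A n / D n) atTop (𝓝 1) := by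
    have h2 : Tendsto (fun n => (1:ℝ) - A n / D n) atTop (𝓝 (1 - 0)) :=
      tendsto_const_nhds.sub hg
    simpa using h2
  apply hfinal.congr'
  filter_upwards [hev] with n hn
  obtain ⟨hn1, hn2⟩ := hn
  have hDn : 0 < D n := lt_of_lt_of_le (hDpos n) (hDlow n)
  have hsplit : (∫ p in ball, (∏ i ∈ Finset.range n, p.1 (X i ω)) ∂Pri) + A n = D n := by
    rw [hA, hD]
    exact integral_add_compl hball_meas (hint _ n)
  have : (∫ p in ball, (∏ i ∈ Finset.range n, p.1 (X i ω)) ∂Pri) = D n - A n := by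
    linarith
  rw [this]
  field_simp
  exact (mul_div_cancel_left₀ (D n - A n) (ne_of_gt hDn)).symm
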